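/- Let f = αx² + βxy + γy² be a real binary quadratic form with Δ(f) ≠ 0 and α ≠ 0, and let F be a real binary quartic form with F_{M_f} = F and Δ(F) ≠ 0. Write (A,B,C) = (a₄,a₃,a₂) for the leading coefficients of F, and set L = −(12γA − 3βB + 2αC)/(2α) and K = (72β²γA² + 9α(β²+4αγ)B² + 8α³C² − 18β(β²+4αγ)AB + 12α(3β²−4αγ)AC − 24α²βBC)/(4α³). Then 3I(F) = L² + K and J(F) = L·K; in particular L is a root of the cubic resolvent Q_F(x) = x³ − 3I(F)x + J(F), and Δ(F) = ((L² + 4K)/9)·((2L² − K)/9)². -/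
import Mathlib


open Polynomial

/-- Value of the binary quartic form `a4 x⁴ + a3 x³y + a2 x²y² + a1 xy³ + a0 y⁴`. -/
def qval {R : Type*} [CommRing R] (a4 a3 a2 a1 a0 x y : R) : R :=
  a4*x^4 + a3*x^3*y + a2*x^2*y^2 + a1*x*y^3 + a0*y^4

/-- Value of the binary quadratic form `a x² + b xy + c y²`. -/
def qdval {R : Type*} [CommRing R] (a b c x y : R) : R :=
  a*x^2 + b*x*y + c*y^2

/-- The invariant `I(F)`. -/
def Iinv {R : Type*} [CommRing R] (a4 a3 a2 a1 a0 : R) : R :=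
  12*a4*a0 - 3*a3*a1 + a2^2

/-- The invariant `J(F)`. -/
def Jinv {R : Type*} [CommRing R] (a4 a3 a2 a1 a0 : R) : R :=
  72*a4*a2*a0 + 9*a3*a2*a1 - 27*a4*a1^2 - 27*a3^2*a0 - 2*a2^3

/-- `F_{M_f} = F` where `f = a x² + b xy + c y²`, `M_f = [[b, 2c], [-2a, -b]]`,
and the action is the twisted action `F_T = det(T)⁻² F ∘ T`
(note `det M_f = -(b²-4ac)`, so the condition is division-free). -/
def fixedMf {R : Type*} [CommRing R] (a b c a4 a3 a2 a1 a0 : R) : Prop :=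
  ∀ x y : R, qval a4 a3 a2 a1 a0 (b*x + 2*c*y) (-(2*a*x) - b*y)
    = (b^2 - 4*a*c)^2 * qval a4 a3 a2 a1 a0 x y

theorem LK_identities (a b c : ℝ) (hdisc : b^2 - 4*a*c ≠ 0) (ha : a ≠ 0)
    (a4 a3 a2 a1 a0 : ℝ) (hfix : fixedMf a b c a4 a3 a2 a1 a0)
    (hΔ : 4 * (Iinv a4 a3 a2 a1 a0)^3 - (Jinv a4 a3 a2 a1 a0)^2 ≠ 0)
    (L K : ℝ)
    (hL : L = -(12*c*a4 - 3*b*a3 + 2*a*a2) / (2*a))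
    (hK : K = (72*b^2*c*a4^2 + 9*a*(b^2 + 4*a*c)*a3^2 + 8*a^3*a2^2
      - 18*b*(b^2 + 4*a*c)*a4*a3 + 12*a*(3*b^2 - 4*a*c)*a4*a2
      - 24*a^2*b*a3*a2) / (4*a^3)) :
    3 * Iinv a4 a3 a2 a1 a0 = L^2 + K ∧
    Jinv a4 a3 a2 a1 a0 = L * K ∧
    L^3 - 3 * Iinv a4 a3 a2 a1 a0 * L + Jinv a4 a3 a2 a1 a0 = 0 ∧
    (4 * (Iinv a4 a3 a2 a1 a0)^3 - (Jinv a4 a3 a2 a1 a0)^2) / 27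
      = ((L^2 + 4*K)/9) * ((2*L^2 - K)/9)^2 := by
  simp only [fixedMf, qval] at hfix
  have h10 := hfix 1 0
  have h01 := hfix 0 1
  have h11 := hfix 1 1
  have h1m1 := hfix 1 (-1)
  have h21 := hfix 2 1
  have h12 := hfix 1 2
  have e40 : 8*a*b^2*c*a4 - 2*a*b^3*a3 - 16*a^2*c^2*a4 + 4*a^2*b^2*a2
      - 8*a^3*b*a1 + 16*a^4*a0 = 0 := by linear_combination h10
  have e31 : 8*b^3*c*a4 + (-2*b^4 - 4*a*b^2*c - 16*a^2*c^2)*a3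
      + (4*a*b^3 + 16*a^2*b*c)*a2 + (-12*a^2*b^2 - 16*a^3*c)*a1 + 32*a^3*b*a0 = 0 := by
    linear_combination (1/4)*h11 - (1/4)*h1m1 + (1/12)*h21 - (1/12)*h12
      - (5/4)*h10 + (5/4)*h01
  have key1 : (32*a^4*(b^2-4*a*c)) * (2*a^2*a1
      - (4*b*c*a4 - (b^2+2*a*c)*a3 + 2*a*b*a2)) = 0 := by
    linear_combination (16*a^4)*e31 - (32*a^3*b)*e40
  have key0 : (8*a^3*(b^2-4*a*c)) * (8*a^3*a0
      - (4*b^2*c*a4 - b^3*a3 + 8*a*c^2*a4 - 4*a*b*c*a3 + 2*a*b^2*a2)) = 0 := by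
    linear_combination (-12*a^2*b^2-16*a^3*c)*e40 + (8*a^3*b)*e31
  have hne1 : (32*a^4*(b^2-4*a*c)) ≠ 0 := by
    apply mul_ne_zero _ hdisc
    positivity
  have hne0 : (8*a^3*(b^2-4*a*c)) ≠ 0 := by
    apply mul_ne_zero _ hdisc
    simp [pow_ne_zero, ha]
  have ha1 : a1 = (4*b*c*a4 - (b^2+2*a*c)*a3 + 2*a*b*a2) / (2*a^2) := by
    have h := (mul_eq_zero.mp key1).resolve_left hne1
    field_simp
    linarith
  have ha0 : a0 = (4*b^2*c*a4 - b^3*a3 + 8*a*c^2*a4 - 4*a*b*c*a3 + 2*a*b^2*a2) / (8*a^3) := by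
    have h := (mul_eq_zero.mp key0).resolve_left hne0
    field_simp
    linarith
  subst ha1 ha0
  have P1 : 3 * Iinv a4 a3 a2
      ((4*b*c*a4 - (b^2+2*a*c)*a3 + 2*a*b*a2) / (2*a^2))
      ((4*b^2*c*a4 - b^3*a3 + 8*a*c^2*a4 - 4*a*b*c*a3 + 2*a*b^2*a2) / (8*a^3))
      = L^2 + K := by
    simp only [Iinv]
    rw [hL, hK]
    field_simp
    ring
  have P2 : Jinv a4 a3 a2
      ((4*b*c*a4 - (b^2+2*a*c)*a3 + 2*a*b*a2) / (2*a^2))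
      ((4*b^2*c*a4 - b^3*a3 + 8*a*c^2*a4 - 4*a*b*c*a3 + 2*a*b^2*a2) / (8*a^3))
      = L * K := by
    simp only [Jinv]
    rw [hL, hK]
    field_simp
    ring
  refine ⟨P1, P2, by linear_combination (-L) * P1 + P2, ?_⟩
  have hI : Iinv a4 a3 a2
      ((4*b*c*a4 - (b^2+2*a*c)*a3 + 2*a*b*a2) / (2*a^2))
      ((4*b^2*c*a4 - b^3*a3 + 8*a*c^2*a4 - 4*a*b*c*a3 + 2*a*b^2*a2) / (8*a^3))
      = (L^2 + K) / 3 := by linarith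
  rw [hI, P2]
  ring
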